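/- The function s ↦ q'(s)² is integrable over ℝ, i.e. ∫_{-∞}^{∞} q'(s)² ds < ∞. -/

import Mathlib

open MeasureTheory Filter Real

theorem stmt_5 (a μ A : ℝ) (ha : 0 < a) (hμ : 1 / 3 < μ) (hA : 0 < A)
    (q : ℝ → ℝ) (hq : ContDiff ℝ 2 q)
    (hode : ∀ s : ℝ, deriv (deriv q) s * q s + a * s * deriv q s * q s
      + μ * q s + (1 / 3) * s * deriv q s = 0)
    (hq0 : q 0 = A) (hq0' : deriv q 0 = 0)
    (hpos : ∀ s : ℝ, 0 < q s) :
    Integrable (fun s : ℝ => deriv q s ^ 2) := by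
  have hμ0 : (0:ℝ) < μ := lt_trans (by norm_num) hμ
  have hne : ∀ s, q s ≠ 0 := fun s => (hpos s).ne'
  have hd1 : Differentiable ℝ q := hq.differentiable (by norm_num)
  have hq1 : ContDiff ℝ 1 (deriv q) := by
    have h2' : ContDiff ℝ ((1:ℕ) + 1) q := by exact_mod_cast hq
    exact (contDiff_succ_iff_deriv.mp h2').2.2
  have hd2 : Differentiable ℝ (deriv q) := hq1.differentiable one_ne_zero
  have hq'c : Continuous (deriv q) := hq1.continuous
  set H : ℝ → ℝ := fun s => (deriv q s)^2/2 + μ * q s with hHdef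
  set D : ℝ → ℝ := fun s => -(s * (deriv q s)^2 * (a + 1/(3 * q s))) with hDdef
  have hP : ∀ x, 0 < a + 1/(3 * q x) := fun x => by have := hpos x; positivity
  have hH : ∀ s, HasDerivAt H (D s) s := by
    intro s
    have h1 : HasDerivAt q (deriv q s) s := (hd1 s).hasDerivAt
    have h2 : HasDerivAt (deriv q) (deriv (deriv q) s) s := (hd2 s).hasDerivAt
    have h3 : HasDerivAt H (deriv q s * deriv (deriv q) s + μ * deriv q s) s := by
      have := ((h2.pow 2).div_const 2).add (h1.const_mul μ)
      refine HasDerivAt.congr_deriv this ?_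
      push_cast; ring
    have key : deriv q s * deriv (deriv q) s + μ * deriv q s
        = -(s * (deriv q s)^2 * (a + 1/(3 * q s))) := by
      have h := hode s
      have hmul : (deriv q s * deriv (deriv q) s + μ * deriv q s) * q s
          = (-(s * (deriv q s)^2 * (a + 1/(3 * q s)))) * q s := by
        field_simp [hne s]
        linear_combination (3 * deriv q s) * h
      exact mul_right_cancel₀ (hne s) hmul
    simpa only [hDdef] using key ▸ h3
  have hcD : Continuous D := by
    apply Continuous.neg
    exact (continuous_id.mul (hq'c.pow 2)).mul
      (continuous_const.add (continuous_const.div (continuous_const.mul hd1.continuous)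
        (fun s => by have := hpos s; positivity)))
  have hHnonneg : ∀ s, 0 ≤ H s := by
    intro s
    have h1 := hpos s
    have h2 := sq_nonneg (deriv q s)
    simp only [hHdef]
    nlinarith
  have hH0 : H 0 = μ * A := by simp [hHdef, hq0, hq0']
  have ftc : ∀ u v : ℝ, ∫ x in u..v, D x = H v - H u := fun u v =>
    intervalIntegral.integral_eq_sub_of_hasDerivAt (fun x _ => hH x)
      (hcD.intervalIntegrable u v)
  set g : ℝ → ℝ := fun s => deriv q s ^ 2 with hgdef
  have hgc : Continuous g := hq'c.pow 2
  -- D x ≥ 0 when x ≤ 0, and -D x ≥ 0 when x ≥ 0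
  have hDnonneg : ∀ x ≤ (0:ℝ), 0 ≤ D x := by
    intro x hx
    have h1 := hP x
    have h2 := sq_nonneg (deriv q x)
    simp only [hDdef]
    nlinarith [mul_nonneg (mul_nonneg (neg_nonneg.mpr hx) h2) h1.le]
  have hnDnonneg : ∀ x, (0:ℝ) ≤ x → 0 ≤ -D x := by
    intro x hx
    have h1 := hP x
    have h2 := sq_nonneg (deriv q x)
    simp only [hDdef, neg_neg]
    nlinarith [mul_nonneg (mul_nonneg hx h2) h1.le]
  -- pointwise comparisons
  have hcmp_pos : ∀ x, (1:ℝ) ≤ x → g x ≤ (1/a) * (-D x) := by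
    intro x hx
    have h1 := hP x
    have h2 := sq_nonneg (deriv q x)
    have hx0 : (0:ℝ) ≤ x := le_trans zero_le_one hx
    have key : a * g x ≤ -D x := by
      simp only [hDdef, hgdef, neg_neg]
      have he : 0 < 1/(3 * q x) := by have := hpos x; positivity
      nlinarith [mul_nonneg (mul_nonneg (sub_nonneg.mpr hx) h2) ha.le,
        mul_nonneg (mul_nonneg hx0 h2) he.le]
    calc g x = (1/a) * (a * g x) := by field_simp
      _ ≤ (1/a) * (-D x) := mul_le_mul_of_nonneg_left key (by positivity)
  have hcmp_neg : ∀ x, x ≤ (-1:ℝ) → g x ≤ (1/a) * D x := by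
    intro x hx
    have h1 := hP x
    have h2 := sq_nonneg (deriv q x)
    have hx0 : x ≤ (0:ℝ) := le_trans hx (by norm_num)
    have key : a * g x ≤ D x := by
      simp only [hDdef, hgdef]
      have he : 0 < 1/(3 * q x) := by have := hpos x; positivity
      nlinarith [mul_nonneg (mul_nonneg (by linarith : (0:ℝ) ≤ -1 - x) h2) ha.le,
        mul_nonneg (mul_nonneg (by linarith : (0:ℝ) ≤ -x) h2) he.le]
    calc g x = (1/a) * (a * g x) := by field_simp
      _ ≤ (1/a) * (D x) := mul_le_mul_of_nonneg_left key (by positivity)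
  -- the right piece
  have hIoi : IntegrableOn g (Set.Ioi 1) := by
    apply MeasureTheory.integrableOn_Ioi_of_intervalIntegral_norm_bounded (μ * A / a) 1
      (fun i => hgc.integrableOn_Ioc) (tendsto_id (x := atTop))
    filter_upwards [eventually_ge_atTop (1:ℝ)] with T hT
    have e1 : ∫ x in (1:ℝ)..T, ‖g x‖ = ∫ x in (1:ℝ)..T, g x := by
      apply intervalIntegral.integral_congr
      intro x _
      simp only [hgdef, Real.norm_eq_abs]
      exact abs_of_nonneg (sq_nonneg _)
    simp only [id_eq]
    rw [e1]
    have step1 : ∫ x in (1:ℝ)..T, g x ≤ ∫ x in (1:ℝ)..T, (1/a) * (-D x) := by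
      apply intervalIntegral.integral_mono_on hT (hgc.intervalIntegrable _ _)
        ((continuous_const.mul hcD.neg).intervalIntegrable _ _)
      intro x hx
      exact hcmp_pos x hx.1
    have e2 : ∫ x in (1:ℝ)..T, (1/a) * (-D x) = (1/a) * ∫ x in (1:ℝ)..T, -D x := by
      simp [intervalIntegral.integral_const_mul]
    have step2 : ∫ x in (1:ℝ)..T, -D x ≤ ∫ x in (0:ℝ)..T, -D x := by
      have hsplit : (∫ x in (0:ℝ)..1, -D x) + (∫ x in (1:ℝ)..T, -D x)
          = ∫ x in (0:ℝ)..T, -D x :=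
        intervalIntegral.integral_add_adjacent_intervals
          ((hcD.neg).intervalIntegrable _ _) ((hcD.neg).intervalIntegrable _ _)
      have h01 : 0 ≤ ∫ x in (0:ℝ)..1, -D x := by
        apply intervalIntegral.integral_nonneg zero_le_one
        intro x hx
        exact hnDnonneg x hx.1
      linarith
    have e3 : ∫ x in (0:ℝ)..T, -D x = H 0 - H T := by
      rw [intervalIntegral.integral_neg, ftc 0 T]; ring
    have hbound : ∫ x in (0:ℝ)..T, -D x ≤ μ * A := by
      rw [e3, hH0]
      have := hHnonneg T
      linarith
    calc ∫ x in (1:ℝ)..T, g x ≤ (1/a) * ∫ x in (1:ℝ)..T, -D x := by rw [← e2]; exact step1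
      _ ≤ (1/a) * (μ * A) := by
          apply mul_le_mul_of_nonneg_left _ (by positivity)
          linarith
      _ = μ * A / a := by ring
  -- the left piece
  have hIic : IntegrableOn g (Set.Iic (-1)) := by
    apply MeasureTheory.integrableOn_Iic_of_intervalIntegral_norm_bounded (μ * A / a) (-1)
      (fun i => hgc.integrableOn_Ioc) (tendsto_id (x := atBot))
    filter_upwards [eventually_le_atBot (-1:ℝ)] with T hT
    have e1 : ∫ x in T..(-1:ℝ), ‖g x‖ = ∫ x in T..(-1:ℝ), g x := by
      apply intervalIntegral.integral_congr
      intro x _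
      simp only [hgdef, Real.norm_eq_abs]
      exact abs_of_nonneg (sq_nonneg _)
    simp only [id_eq]
    rw [e1]
    have step1 : ∫ x in T..(-1:ℝ), g x ≤ ∫ x in T..(-1:ℝ), (1/a) * D x := by
      apply intervalIntegral.integral_mono_on hT (hgc.intervalIntegrable _ _)
        ((continuous_const.mul hcD).intervalIntegrable _ _)
      intro x hx
      exact hcmp_neg x hx.2
    have e2 : ∫ x in T..(-1:ℝ), (1/a) * D x = (1/a) * ∫ x in T..(-1:ℝ), D x := by
      simp [intervalIntegral.integral_const_mul]
    have step2 : ∫ x in T..(-1:ℝ), D x ≤ ∫ x in T..(0:ℝ), D x := by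
      have hsplit : (∫ x in T..(-1:ℝ), D x) + (∫ x in (-1:ℝ)..0, D x)
          = ∫ x in T..(0:ℝ), D x :=
        intervalIntegral.integral_add_adjacent_intervals
          (hcD.intervalIntegrable _ _) (hcD.intervalIntegrable _ _)
      have h01 : 0 ≤ ∫ x in (-1:ℝ)..0, D x := by
        apply intervalIntegral.integral_nonneg (by norm_num)
        intro x hx
        exact hDnonneg x hx.2
      linarith
    have hbound : ∫ x in T..(0:ℝ), D x ≤ μ * A := by
      rw [ftc T 0, hH0]
      have := hHnonneg T
      linarith
    calc ∫ x in T..(-1:ℝ), g x ≤ (1/a) * ∫ x in T..(-1:ℝ), D x := by rw [← e2]; exact step1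
      _ ≤ (1/a) * (μ * A) := by
          apply mul_le_mul_of_nonneg_left _ (by positivity)
          linarith
      _ = μ * A / a := by ring
  have hIcc : IntegrableOn g (Set.Icc (-1) 1) := hgc.integrableOn_Icc
  have huniv : (Set.univ : Set ℝ) = Set.Iic (-1) ∪ (Set.Icc (-1) 1 ∪ Set.Ioi 1) := by
    ext x
    simp only [Set.mem_univ, Set.mem_union, Set.mem_Iic, Set.mem_Icc, Set.mem_Ioi, true_iff]
    rcases le_or_gt x (-1) with h | h
    · exact Or.inl h
    · rcases le_or_gt x 1 with h' | h'
      · exact Or.inr (Or.inl ⟨h.le, h'⟩)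
      · exact Or.inr (Or.inr h')
  rw [← integrableOn_univ, huniv]
  exact hIic.union (hIcc.union hIoi)
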